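/- Let α : ℝ → ℝ be strictly increasing with α(0) = 0 (an extended class-K function), and let h : [0,∞) → ℝ be differentiable with h(0) ≥ 0 and h′(t) ≥ −α(h(t)) for all t ≥ 0. Then h(t) ≥ 0 for all t ≥ 0; that is, the safe set {t : h(t) ≥ 0} is forward invariant. -/
import Mathlib


/-- Forward invariance of the safe set under the CBF condition:
if `α` is an extended class-K function (strictly increasing, `α 0 = 0`), `h` is
differentiable with `h 0 ≥ 0` and `h' t ≥ -α (h t)` for all `t ≥ 0`, then
`h t ≥ 0` for all `t ≥ 0`. -/
theorem cbf_forward_invariance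
    (α : ℝ → ℝ) (hα_mono : StrictMono α) (hα0 : α 0 = 0)
    (h : ℝ → ℝ) (hdiff : ∀ t, 0 ≤ t → DifferentiableAt ℝ h t)
    (h0 : 0 ≤ h 0)
    (hcbf : ∀ t, 0 ≤ t → -α (h t) ≤ deriv h t) :
    ∀ t, 0 ≤ t → 0 ≤ h t := by
  intro t₁ ht₁
  by_contra hneg
  push_neg at hneg
  set A : Set ℝ := Set.Icc 0 t₁ ∩ h ⁻¹' Set.Ici 0 with hA
  have hcontIcc : ContinuousOn h (Set.Icc 0 t₁) := fun x hx =>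
    (hdiff x hx.1).continuousAt.continuousWithinAt
  have hAclosed : IsClosed A :=
    hcontIcc.preimage_isClosed_of_isClosed isClosed_Icc isClosed_Ici
  have hAne : A.Nonempty := ⟨0, ⟨le_refl 0, ht₁⟩, h0⟩
  have hAcompact : IsCompact A :=
    isCompact_Icc.of_isClosed_subset hAclosed Set.inter_subset_left
  set s := sSup A with hs
  have hsA : s ∈ A := hAcompact.sSup_mem hAne
  have hs0 : (0:ℝ) ≤ s := hsA.1.1
  have hst : s ≤ t₁ := hsA.1.2
  have hhs' : (0:ℝ) ≤ h s := hsA.2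
  have hslt : s < t₁ := lt_of_le_of_ne hst fun he => absurd (he ▸ hhs') (not_le.2 hneg)
  -- on (s, t₁), h is negative
  have hnegOo : ∀ x ∈ Set.Ioo s t₁, h x < 0 := by
    intro x hx
    by_contra hge
    push_neg at hge
    have : x ∈ A := ⟨⟨hs0.trans hx.1.le, hx.2.le⟩, hge⟩
    exact absurd (le_csSup hAcompact.bddAbove this) (not_le.2 hx.1)
  -- hence deriv h > 0 on (s, t₁)
  have hderivpos : ∀ x ∈ Set.Ioo s t₁, 0 < deriv h x := by
    intro x hx
    have hx0 : (0:ℝ) ≤ x := hs0.trans hx.1.le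
    have : α (h x) < α 0 := hα_mono (hnegOo x hx)
    rw [hα0] at this
    have := hcbf x hx0
    linarith
  have hcontIcc' : ContinuousOn h (Set.Icc s t₁) :=
    hcontIcc.mono (Set.Icc_subset_Icc hs0 le_rfl)
  have hmono : StrictMonoOn h (Set.Icc s t₁) := by
    apply strictMonoOn_of_deriv_pos (convex_Icc s t₁) hcontIcc'
    intro x hx
    rw [interior_Icc] at hx
    exact hderivpos x hx
  have : h s < h t₁ :=
    hmono (Set.left_mem_Icc.2 hslt.le) (Set.right_mem_Icc.2 hslt.le) hslt
  linarith
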